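/- (Jeavons) Let Γ, Γ' be finite constraint languages over a finite domain. If Pol(Γ) ⊆ Pol(Γ'), then every relation of Γ' is pp-definable from Γ, i.e., Γ' ⊆ ⟨Γ⟩. -/

import Mathlib

/-- An operation `f : D^m → D` is a polymorphism of a relation `R ⊆ D^k` if
applying `f` coordinate-wise to any `m` tuples of `R` yields a tuple of `R`. -/
def IsPolymorphism {D : Type*} {m k : ℕ} (f : (Fin m → D) → D)
    (R : Set (Fin k → D)) : Prop :=
  ∀ ts : Fin m → Fin k → D, (∀ i, ts i ∈ R) → (fun j => f (fun i => ts i j)) ∈ R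

/-- An atom of a pp-definition of a `k`-ary relation using `m` existentially
quantified variables: either a constraint `S(w₁,…,w_l)` on some of the
variables (which range over `Fin k ⊕ Fin m`), or an equality `u = v`. -/
inductive Atom (D : Type*) (k m : ℕ) where
  | rel (l : ℕ) (S : Set (Fin l → D)) (vars : Fin l → Fin k ⊕ Fin m)
  | eq (u v : Fin k ⊕ Fin m)

/-- All relations occurring in the atom belong to the constraint language `Γ`. -/
def Atom.OverLang {D : Type*} {k m : ℕ} (Γ : Set ((l : ℕ) × Set (Fin l → D))) :
    Atom D k m → Prop
  | .rel l S _ => (⟨l, S⟩ : (l : ℕ) × Set (Fin l → D)) ∈ Γ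
  | .eq _ _ => True

/-- Satisfaction of an atom under the assignment `a` to the free variables and
`b` to the existentially quantified variables. -/
def Atom.Sat {D : Type*} {k m : ℕ} (A : Atom D k m) (a : Fin k → D)
    (b : Fin m → D) : Prop :=
  match A with
  | .rel _ S vars => (fun i => Sum.elim a b (vars i)) ∈ S
  | .eq u v => Sum.elim a b u = Sum.elim a b v

/-- `R` is pp-definable from `Γ`: `R(v₁,…,v_k) ≡ ∃x₁…∃x_m 𝒞` where `𝒞` is a
finite conjunction of constraints over relations of `Γ` and equalities. -/
def ppDefinable {D : Type*} (Γ : Set ((l : ℕ) × Set (Fin l → D))) {k : ℕ}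
    (R : Set (Fin k → D)) : Prop :=
  ∃ (m : ℕ) (C : List (Atom D k m)),
    (∀ A ∈ C, Atom.OverLang Γ A) ∧
    R = {a | ∃ b : Fin m → D, ∀ A ∈ C, A.Sat a b}

/-- (Jeavons) Let `Γ, Γ'` be finite constraint languages over a finite domain.
If `Pol(Γ) ⊆ Pol(Γ')`, then every relation of `Γ'` is pp-definable from `Γ`,
i.e. `Γ' ⊆ ⟨Γ⟩`. -/
theorem pol_subset_implies_ppDefinable {D : Type*} [Fintype D]
    (Γ Γ' : Set ((l : ℕ) × Set (Fin l → D)))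
    (hΓ : Γ.Finite) (hΓ' : Γ'.Finite)
    (hPol : ∀ (n : ℕ) (f : (Fin n → D) → D),
      (∀ S ∈ Γ, IsPolymorphism f S.2) → ∀ S ∈ Γ', IsPolymorphism f S.2) :
    ∀ S ∈ Γ', ppDefinable Γ S.2 := by
  classical
  rintro ⟨k, R⟩ hS'
  haveI : Fintype R := (Set.toFinite R).fintype
  set n := Fintype.card R with hn
  let e : Fin n ≃ R := (Fintype.equivFin R).symm
  let r : Fin n → (Fin k → D) := fun i => (e i : Fin k → D)
  set m := Fintype.card (Fin n → D) with hm
  let ve : Fin m ≃ (Fin n → D) := (Fintype.equivFin (Fin n → D)).symm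
  let relAtoms : List (Atom D k m) :=
    hΓ.toFinset.toList.flatMap (fun S =>
      (((Finset.univ : Finset (Fin n → Fin S.1 → D)).filter
        (fun ts => ∀ i, ts i ∈ S.2)).toList).map
        (fun ts => Atom.rel S.1 S.2 (fun j => Sum.inr (ve.symm (fun i => ts i j)))))
  let eqAtoms : List (Atom D k m) :=
    List.ofFn (fun j : Fin k => Atom.eq (Sum.inl j) (Sum.inr (ve.symm (fun i => r i j))))
  refine ⟨m, relAtoms ++ eqAtoms, ?_, ?_⟩
  · intro A hA
    rcases List.mem_append.mp hA with h | h
    · simp only [relAtoms, List.mem_flatMap, List.mem_map] at h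
      obtain ⟨S, hS, ts, hts, rfl⟩ := h
      have hSΓ : S ∈ Γ := hΓ.mem_toFinset.mp (Finset.mem_toList.mp hS)
      show (⟨S.1, S.2⟩ : (l : ℕ) × Set (Fin l → D)) ∈ Γ
      simpa using hSΓ
    · simp only [eqAtoms, List.mem_ofFn] at h
      obtain ⟨j, rfl⟩ := h
      trivial
  · ext a
    simp only [Set.mem_setOf_eq]
    constructor
    · intro ha
      refine ⟨fun v => ve v (e.symm ⟨a, ha⟩), ?_⟩
      intro A hA
      rcases List.mem_append.mp hA with h | h
      · simp only [relAtoms, List.mem_flatMap, List.mem_map] at h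
        obtain ⟨S, hS, ts, hts, rfl⟩ := h
        have hts' : ∀ i, ts i ∈ S.2 := (Finset.mem_filter.mp (Finset.mem_toList.mp hts)).2
        show (fun j => Sum.elim a _ (Sum.inr (ve.symm (fun i => ts i j)))) ∈ S.2
        simpa using hts' (e.symm ⟨a, ha⟩)
      · simp only [eqAtoms, List.mem_ofFn] at h
        obtain ⟨j, rfl⟩ := h
        show Sum.elim a _ (Sum.inl j) = Sum.elim a _ (Sum.inr (ve.symm (fun i => r i j)))
        simp only [Sum.elim_inl, Sum.elim_inr, Equiv.apply_symm_apply]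
        show a j = r (e.symm ⟨a, ha⟩) j
        simp [r, e]
    · rintro ⟨b, hb⟩
      set F : (Fin n → D) → D := fun g => b (ve.symm g) with hF
      have hFpoly : ∀ S ∈ Γ, IsPolymorphism F S.2 := by
        intro S hS ts hts
        have hmem : (Atom.rel S.1 S.2 (fun j => Sum.inr (ve.symm (fun i => ts i j))) :
            Atom D k m) ∈ relAtoms ++ eqAtoms := by
          refine List.mem_append.mpr (Or.inl ?_)
          simp only [relAtoms, List.mem_flatMap, List.mem_map]
          exact ⟨S, Finset.mem_toList.mpr (hΓ.mem_toFinset.mpr hS),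
            ts, Finset.mem_toList.mpr (Finset.mem_filter.mpr ⟨Finset.mem_univ _, hts⟩), rfl⟩
        have := hb _ hmem
        simpa [Atom.Sat, hF] using this
      have hFR : IsPolymorphism F R := hPol n F hFpoly ⟨k, R⟩ hS'
      have hr : ∀ i, r i ∈ R := fun i => (e i).2
      have hmemR := hFR r hr
      have haj : ∀ j, a j = F (fun i => r i j) := by
        intro j
        have hmem : (Atom.eq (Sum.inl j) (Sum.inr (ve.symm (fun i => r i j))) :
            Atom D k m) ∈ relAtoms ++ eqAtoms := by
          refine List.mem_append.mpr (Or.inr ?_)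
          simp only [eqAtoms, List.mem_ofFn]
          exact ⟨j, rfl⟩
        have := hb _ hmem
        simpa [Atom.Sat, hF] using this
      have : a = fun j => F (fun i => r i j) := funext haj
      rw [this]
      exact hmemR
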